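/- Fix data points x_1,…,x_n ∈ ℝ^d and k ≥ 1, and let K be a compact subset of (ℝ^d)^k. Let σ_m > 0 with σ_m → 0, and for each m let μ^{(m)} ∈ K be a minimizer of L_{σ_m} over K (i.e. L_{σ_m}(μ^{(m)}) ≤ L_{σ_m}(ν) for all ν ∈ K). If μ^{(m)} converges to some μ̄ ∈ K (along the full sequence or a subsequence), then μ̄ minimizes the K-Means distortion J over K: J(μ̄) ≤ J(ν) for all ν ∈ K. -/

import Mathlib

open Filter

/-- The soft RBF loss `L_σ(μ)`. -/
noncomputable def softLoss (d n k : ℕ) (x : Fin n → EuclideanSpace ℝ (Fin d))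
    (σ : ℝ) (μ : Fin k → EuclideanSpace ℝ (Fin d)) : ℝ :=
  ∑ i, ∑ j,
    (Real.exp (-‖x i - μ j‖ ^ 2 / (2 * σ ^ 2)) /
      ∑ ℓ, Real.exp (-‖x i - μ ℓ‖ ^ 2 / (2 * σ ^ 2))) * ‖x i - μ j‖ ^ 2

/-- The K-Means distortion `J(μ)`. -/
noncomputable def distortion (d n k : ℕ) (x : Fin n → EuclideanSpace ℝ (Fin d))
    (μ : Fin k → EuclideanSpace ℝ (Fin d)) : ℝ :=
  ∑ i, ⨅ j : Fin k, ‖x i - μ j‖ ^ 2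

section Aux

variable {d n k : ℕ} (x : Fin n → EuclideanSpace ℝ (Fin d))

/-- J ≤ L_σ pointwise. -/
lemma distortion_le_softLoss (hk : 1 ≤ k) (σ : ℝ)
    (μ : Fin k → EuclideanSpace ℝ (Fin d)) :
    distortion d n k x μ ≤ softLoss d n k x σ μ := by
  haveI : Nonempty (Fin k) := ⟨⟨0, hk⟩⟩
  unfold distortion softLoss
  refine Finset.sum_le_sum fun i _ => ?_
  set D : Fin k → ℝ := fun j => ‖x i - μ j‖ ^ 2 with hD
  set e : Fin k → ℝ := fun j => Real.exp (-D j / (2 * σ ^ 2)) with he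
  have hS : 0 < ∑ ℓ, e ℓ :=
    Finset.sum_pos (fun _ _ => Real.exp_pos _) Finset.univ_nonempty
  have hsum1 : ∑ j, e j / (∑ ℓ, e ℓ) = 1 := by
    rw [← Finset.sum_div, div_self hS.ne']
  have hbdd : BddBelow (Set.range D) := (Set.finite_range D).bddBelow
  calc ⨅ j, D j = ∑ j, (e j / (∑ ℓ, e ℓ)) * (⨅ j, D j) := by
        rw [← Finset.sum_mul, hsum1, one_mul]
    _ ≤ ∑ j, (e j / (∑ ℓ, e ℓ)) * D j := by
        refine Finset.sum_le_sum fun j _ => ?_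
        exact mul_le_mul_of_nonneg_left (ciInf_le hbdd j)
          (div_nonneg (Real.exp_pos _).le hS.le)

set_option maxHeartbeats 1000000 in
/-- L_σ ≤ J + 2nkσ². -/
lemma softLoss_le_distortion_add (hk : 1 ≤ k) {σ : ℝ} (hσ : 0 < σ)
    (μ : Fin k → EuclideanSpace ℝ (Fin d)) :
    softLoss d n k x σ μ ≤ distortion d n k x μ + n * (k * (2 * σ ^ 2)) := by
  haveI : Nonempty (Fin k) := ⟨⟨0, hk⟩⟩
  unfold distortion softLoss
  have hper : ∀ i ∈ Finset.univ, (∑ j,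
      (Real.exp (-‖x i - μ j‖ ^ 2 / (2 * σ ^ 2)) /
        ∑ ℓ, Real.exp (-‖x i - μ ℓ‖ ^ 2 / (2 * σ ^ 2))) * ‖x i - μ j‖ ^ 2)
      ≤ (⨅ j : Fin k, ‖x i - μ j‖ ^ 2) + k * (2 * σ ^ 2) := by
    intro i _
    set D : Fin k → ℝ := fun j => ‖x i - μ j‖ ^ 2 with hD
    set e : Fin k → ℝ := fun j => Real.exp (-D j / (2 * σ ^ 2)) with he
    set S : ℝ := ∑ ℓ, e ℓ with hSdef
    have hS : 0 < S := Finset.sum_pos (fun _ _ => Real.exp_pos _) Finset.univ_nonempty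
    have hbdd : BddBelow (Set.range D) := (Set.finite_range D).bddBelow
    set m : ℝ := ⨅ j, D j with hm
    obtain ⟨j₀, hj₀⟩ := Finite.exists_min D
    have hmeq : m = D j₀ := le_antisymm (ciInf_le hbdd j₀) (le_ciInf hj₀)
    have hSlb : Real.exp (-m / (2 * σ ^ 2)) ≤ S := by
      have h0 : e j₀ ≤ S :=
        Finset.single_le_sum (f := e) (fun ℓ _ => (Real.exp_pos ((-D ℓ) / (2 * σ ^ 2))).le)
          (Finset.mem_univ j₀)
      rw [hmeq]
      exact h0
    have h2σ : 0 < 2 * σ ^ 2 := by positivity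
    have hsum1 : ∑ j, e j / S = 1 := by rw [← Finset.sum_div, div_self hS.ne']
    have key : ∀ j, (e j / S) * D j ≤ (e j / S) * m + 2 * σ ^ 2 := by
      intro j
      have htnn : 0 ≤ D j - m := sub_nonneg.2 (ciInf_le hbdd j)
      have hr_le : e j / S ≤ Real.exp (-(D j - m) / (2 * σ ^ 2)) := by
        rw [div_le_iff₀ hS]
        have harg : -D j / (2 * σ ^ 2) = -(D j - m) / (2 * σ ^ 2) + -m / (2 * σ ^ 2) := by
          rw [← add_div]; congr 1; ring
        calc e j = Real.exp (-(D j - m) / (2 * σ ^ 2) + -m / (2 * σ ^ 2)) := by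
              rw [he]; simp only []; rw [harg]
          _ = Real.exp (-(D j - m) / (2 * σ ^ 2)) * Real.exp (-m / (2 * σ ^ 2)) :=
              Real.exp_add _ _
          _ ≤ Real.exp (-(D j - m) / (2 * σ ^ 2)) * S :=
              mul_le_mul_of_nonneg_left hSlb (Real.exp_pos _).le
      have hte : (D j - m) * Real.exp (-(D j - m) / (2 * σ ^ 2)) ≤ 2 * σ ^ 2 := by
        set u : ℝ := (D j - m) / (2 * σ ^ 2) with hu
        have hun : 0 ≤ u := div_nonneg htnn h2σ.le
        have h1 : u * Real.exp (-u) ≤ 1 := by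
          rw [Real.exp_neg, mul_inv_le_iff₀ (Real.exp_pos u), one_mul]
          nlinarith [Real.add_one_le_exp u]
        have h3 : D j - m = 2 * σ ^ 2 * u := by rw [hu, mul_div_cancel₀ _ h2σ.ne']
        have h4 : -(D j - m) / (2 * σ ^ 2) = -u := by rw [hu]; ring
        calc (D j - m) * Real.exp (-(D j - m) / (2 * σ ^ 2))
            = 2 * σ ^ 2 * (u * Real.exp (-u)) := by rw [h4, h3]; ring
          _ ≤ 2 * σ ^ 2 * 1 := by
              exact mul_le_mul_of_nonneg_left h1 h2σ.le
          _ = 2 * σ ^ 2 := mul_one _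
      have hDj : D j = m + (D j - m) := by ring
      calc (e j / S) * D j = (e j / S) * m + (e j / S) * (D j - m) := by
            rw [hDj]; ring
        _ ≤ (e j / S) * m + (D j - m) * Real.exp (-(D j - m) / (2 * σ ^ 2)) := by
            refine add_le_add_right ?_ _
            calc (e j / S) * (D j - m) ≤ Real.exp (-(D j - m) / (2 * σ ^ 2)) * (D j - m) :=
                  mul_le_mul_of_nonneg_right hr_le htnn
              _ = (D j - m) * Real.exp (-(D j - m) / (2 * σ ^ 2)) := mul_comm _ _
        _ ≤ (e j / S) * m + 2 * σ ^ 2 := add_le_add_right hte _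
    calc ∑ j, (e j / S) * D j ≤ ∑ j, ((e j / S) * m + 2 * σ ^ 2) :=
          Finset.sum_le_sum fun j _ => key j
      _ = (∑ j, e j / S) * m + k * (2 * σ ^ 2) := by
          rw [Finset.sum_add_distrib, ← Finset.sum_mul, Finset.sum_const,
            Finset.card_univ, Fintype.card_fin, nsmul_eq_mul]
      _ = m + k * (2 * σ ^ 2) := by rw [hsum1, one_mul]
  calc _ ≤ ∑ i, ((⨅ j : Fin k, ‖x i - μ j‖ ^ 2) + k * (2 * σ ^ 2)) :=
        Finset.sum_le_sum hper
    _ = (∑ i, ⨅ j : Fin k, ‖x i - μ j‖ ^ 2) + n * (k * (2 * σ ^ 2)) := by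
        rw [Finset.sum_add_distrib, Finset.sum_const, Finset.card_univ,
          Fintype.card_fin, nsmul_eq_mul]

lemma continuous_distortion (hk : 1 ≤ k) :
    Continuous (distortion d n k x) := by
  haveI : Nonempty (Fin k) := ⟨⟨0, hk⟩⟩
  unfold distortion
  refine continuous_finset_sum _ fun i _ => ?_
  have : (fun μ : Fin k → EuclideanSpace ℝ (Fin d) => ⨅ j : Fin k, ‖x i - μ j‖ ^ 2)
      = fun μ => Finset.univ.inf' Finset.univ_nonempty (fun j => ‖x i - μ j‖ ^ 2) := by
    funext μ; rw [Finset.inf'_univ_eq_ciInf]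
  rw [this]
  exact Continuous.finset_inf'_apply Finset.univ_nonempty fun j _ => by fun_prop

end Aux

/-- Convergence of minimizers on a compact constraint set: if
`σ_m → 0⁺`, each `μ^{(m)}` minimizes `L_{σ_m}` over a compact set `K`, and
(a subsequence of) `μ^{(m)}` converges to `μ̄ ∈ K`, then `μ̄` minimizes the
K-Means distortion `J` over `K`. -/
theorem minimizers_converge_to_kmeans_minimizer
    (d n k : ℕ) (hk : 1 ≤ k)
    (x : Fin n → EuclideanSpace ℝ (Fin d))
    (K : Set (Fin k → EuclideanSpace ℝ (Fin d))) (hK : IsCompact K)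
    (σ : ℕ → ℝ) (hσpos : ∀ m, 0 < σ m) (hσ : Tendsto σ atTop (nhds 0))
    (μseq : ℕ → Fin k → EuclideanSpace ℝ (Fin d))
    (hmem : ∀ m, μseq m ∈ K)
    (hmin : ∀ m, ∀ ν ∈ K, softLoss d n k x (σ m) (μseq m) ≤ softLoss d n k x (σ m) ν)
    (φ : ℕ → ℕ) (hφ : StrictMono φ)
    (μbar : Fin k → EuclideanSpace ℝ (Fin d)) (hbar : μbar ∈ K)
    (hconv : Tendsto (fun m => μseq (φ m)) atTop (nhds μbar)) :
    ∀ ν ∈ K, distortion d n k x μbar ≤ distortion d n k x ν := by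
  intro ν hν
  have hineq : ∀ m, distortion d n k x (μseq (φ m))
      ≤ distortion d n k x ν + n * (k * (2 * (σ (φ m)) ^ 2)) := fun m =>
    ((distortion_le_softLoss x hk (σ (φ m)) (μseq (φ m))).trans
      (hmin (φ m) ν hν)).trans
      (softLoss_le_distortion_add x hk (hσpos (φ m)) ν)
  have hσφ : Tendsto (fun m => σ (φ m)) atTop (nhds 0) :=
    hσ.comp (hφ.tendsto_atTop)
  have hL : Tendsto (fun m => distortion d n k x (μseq (φ m))) atTop
      (nhds (distortion d n k x μbar)) :=
    ((continuous_distortion x hk).tendsto μbar).comp hconv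
  have hR : Tendsto (fun m => distortion d n k x ν + n * (k * (2 * (σ (φ m)) ^ 2)))
      atTop (nhds (distortion d n k x ν)) := by
    have : Tendsto (fun m => (n : ℝ) * (k * (2 * (σ (φ m)) ^ 2))) atTop (nhds 0) := by
      have := ((hσφ.pow 2).const_mul (2 : ℝ)).const_mul (k : ℝ)
      simpa using this.const_mul (n : ℝ)
    simpa using (tendsto_const_nhds.add this)
  exact le_of_tendsto_of_tendsto' hL hR hineq
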